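/- Let n be a finite-dimensional abelian real Lie algebra (so every linear endomorphism of n is a derivation), and let D₁, D₂ be linear endomorphisms of n all of whose eigenvalues have positive real part. Then the expanded Lie algebras n(D₁) and n(D₂) are isomorphic as Lie algebras if and only if there exist an invertible linear map g of n and a real number λ ≠ 0 such that D₁ = λ · g⁻¹ ∘ D₂ ∘ g. -/

import Mathlib

open Module

/-- All eigenvalues (complex roots of the characteristic polynomial) of `f` have
positive real part. -/
def PosSpec {V : Type*} [AddCommGroup V] [Module ℝ V] [Module.Finite ℝ V]
    (f : Module.End ℝ V) : Prop :=
  ∀ z ∈ ((LinearMap.charpoly f).map (algebraMap ℝ ℂ)).roots, 0 < z.re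

/-- The bracket of the expanded Lie algebra `n(D) = n ⊕ ℝ`, where `A_D = (0,1)`. -/
def expBracket {L : Type*} [LieRing L] [LieAlgebra ℝ L] (D : Module.End ℝ L)
    (p q : L × ℝ) : L × ℝ :=
  (⁅p.1, q.1⁆ + p.2 • D q.1 - q.2 • D p.1, 0)

/-- The expanded Lie algebras `n(D₁)` and `n(D₂)` are isomorphic as Lie algebras. -/
def ExpIso {L : Type*} [LieRing L] [LieAlgebra ℝ L] (D₁ D₂ : Module.End ℝ L) : Prop :=
  ∃ e : (L × ℝ) ≃ₗ[ℝ] (L × ℝ), ∀ p q, e (expBracket D₁ p q) = expBracket D₂ (e p) (e q)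

lemma posSpec_sq_ne_zero {n : Type*} [AddCommGroup n] [Module ℝ n] [Module.Finite ℝ n]
    [Nontrivial n] (D : Module.End ℝ n) (hp : PosSpec D) : ∃ y, D (D y) ≠ 0 := by
  by_contra h
  push_neg at h
  have hnil : IsNilpotent D := ⟨2, by ext y; simpa [pow_succ] using h y⟩
  have hc := hnil.charpoly_eq_X_pow_finrank
  have h0 : (0:ℂ) ∈ ((LinearMap.charpoly D).map (algebraMap ℝ ℂ)).roots := by
    rw [hc]
    rw [Polynomial.map_pow, Polynomial.map_X, Polynomial.roots_pow, Polynomial.roots_X]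
    exact Multiset.mem_nsmul.mpr ⟨Module.finrank_pos.ne', Multiset.mem_singleton_self 0⟩
  simpa using hp 0 h0

theorem stmt3 {n : Type*} [LieRing n] [LieAlgebra ℝ n] [Module.Finite ℝ n]
    [IsLieAbelian n]
    (D₁ D₂ : Module.End ℝ n) (hp₁ : PosSpec D₁) (hp₂ : PosSpec D₂) :
    ExpIso D₁ D₂ ↔
      ∃ (g : n ≃ₗ[ℝ] n) (lam : ℝ), lam ≠ 0 ∧
        ∀ y : n, D₁ y = lam • g.symm (D₂ (g y)) := by
  have hB : ∀ (D : Module.End ℝ n) (p q : n × ℝ),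
      expBracket D p q = (p.2 • D q.1 - q.2 • D p.1, 0) := by
    intro D p q; simp [expBracket, trivial_lie_zero]
  constructor
  · rintro ⟨e, he⟩
    rcases subsingleton_or_nontrivial n with hs | hn
    · exact ⟨LinearEquiv.refl ℝ n, 1, one_ne_zero, fun y => Subsingleton.elim _ _⟩
    have hchar : ∀ (D : Module.End ℝ n), PosSpec D → ∀ p : n × ℝ,
        ((∀ q, expBracket D p (expBracket D p q) = 0) ↔ p.2 = 0) := by
      intro D hD p
      constructor
      · intro h
        obtain ⟨y, hy⟩ := posSpec_sq_ne_zero D hD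
        have h1 := h (y, 0)
        rw [hB, hB] at h1
        have h1' := congrArg Prod.fst h1
        by_contra hp2
        apply hy
        have h2 : p.2 • p.2 • D (D y) = 0 := by
          simpa [map_smul] using h1'
        have h3 := (smul_eq_zero.mp h2).resolve_left hp2
        exact (smul_eq_zero.mp h3).resolve_left hp2
      · intro h q
        rw [hB, hB]
        simp [h, Prod.ext_iff]
    have hsq : ∀ p : n × ℝ, (∀ q, expBracket D₁ p (expBracket D₁ p q) = 0) ↔
        (∀ q, expBracket D₂ (e p) (expBracket D₂ (e p) q) = 0) := by
      intro p
      constructor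
      · intro h q
        obtain ⟨q', rfl⟩ := e.surjective q
        rw [← he, ← he, h q', map_zero]
      · intro h q
        have h1 := h (e q)
        rw [← he, ← he] at h1
        exact e.injective (by simpa using h1)
    have hsnd : ∀ p : n × ℝ, (e p).2 = 0 ↔ p.2 = 0 := by
      intro p
      rw [← hchar D₂ hp₂, ← hsq p, hchar D₁ hp₁]
    set f : n →ₗ[ℝ] n :=
      (LinearMap.fst ℝ n ℝ) ∘ₗ (e : (n × ℝ) →ₗ[ℝ] (n × ℝ)) ∘ₗ (LinearMap.inl ℝ n ℝ) with hf
    have he0 : ∀ x : n, e (x, 0) = (f x, 0) := by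
      intro x
      have h2 : (e (x, 0)).2 = 0 := (hsnd (x, 0)).mpr rfl
      exact Prod.ext rfl h2
    have hinj : Function.Injective f := by
      intro x y hxy
      have : e (x, 0) = e (y, 0) := by rw [he0, he0, hxy]
      exact congrArg Prod.fst (e.injective this)
    have hsurj : Function.Surjective f := by
      intro z
      refine ⟨(e.symm (z, 0)).1, ?_⟩
      have h2 : (e.symm (z, 0)).2 = 0 := by
        rw [← hsnd (e.symm (z, 0)), e.apply_symm_apply]
      have h3 : e.symm (z, 0) = ((e.symm (z, 0)).1, (0:ℝ)) := Prod.ext rfl h2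
      have h4 := he0 (e.symm (z, 0)).1
      rw [← h3, e.apply_symm_apply] at h4
      exact (congrArg Prod.fst h4).symm
    let g : n ≃ₗ[ℝ] n := LinearEquiv.ofBijective f ⟨hinj, hsurj⟩
    have hlam : (e (0, 1)).2 ≠ 0 := by
      intro h0
      exact one_ne_zero ((hsnd (0, 1)).mp h0)
    refine ⟨g, (e (0, 1)).2, hlam, ?_⟩
    intro y
    have key := he (0, 1) (y, 0)
    rw [hB, hB] at key
    simp only [smul_zero, sub_zero, one_smul, zero_smul, map_zero] at key
    rw [he0, he0] at key
    have key1 : f (D₁ y) = (e (0, 1)).2 • D₂ (f y) := by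
      have := congrArg Prod.fst key
      simpa using this
    have hgy : g y = f y := rfl
    have h5 : g (D₁ y) = (e (0, 1)).2 • D₂ (g y) := by rw [hgy]; exact key1
    have h6 := congrArg g.symm h5
    rwa [g.symm_apply_apply, map_smul] at h6
  · rintro ⟨g, lam, hlam, hgd⟩
    have hg : ∀ y, g (D₁ y) = lam • D₂ (g y) := by
      intro y
      rw [hgd y, map_smul, g.apply_symm_apply]
    refine ⟨g.prodCongr (LinearEquiv.smulOfNeZero ℝ ℝ lam hlam), ?_⟩
    intro p q
    simp only [hB, LinearEquiv.prodCongr_apply, LinearEquiv.smulOfNeZero_apply, map_sub, map_smul,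
      hg, smul_smul, smul_eq_mul, Units.smul_def, Units.val_mk0, Prod.ext_iff]
    constructor
    · rw [mul_comm p.2 lam, mul_comm q.2 lam]
    · simp
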